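/- arXiv:2001.02968 — 4 statements merged into one kernel-verified Lean document; each statement's English description precedes it below -/
import Mathlib

section
/- Let f : [0,1]^d → ℝ be continuously differentiable with 1-Lipschitz gradient, let R ⊆ [0,1]^d be an axis-aligned hyperrectangle, x ∈ R, and c ≥ 0. Suppose the unit-speed projected gradient flow x(t) starting at x (dx/dt = −g(x(t))/‖g(x(t))‖ where g is the projected gradient) stays in [0,1]^d and that ‖g(x(t))‖ > c for all t in [0,T] where T is the exit time of R. Then min_{y∈E} f(y) ≤ f(x) − c·dist(x,E), where E is the face of R through which the flow exits. -/
open scoped Classical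

/-- The projected gradient on the unit cube `[0,1]^d`, where `G` is the
gradient field of `f`. -/
noncomputable def projGrad (d : ℕ)
    (G : EuclideanSpace ℝ (Fin d) → EuclideanSpace ℝ (Fin d))
    (x : EuclideanSpace ℝ (Fin d)) : EuclideanSpace ℝ (Fin d) :=
  WithLp.toLp 2 (fun i => if x i = 0 then max 0 (G x i)
    else if x i = 1 then min 0 (G x i) else G x i)

lemma key_inner (d : ℕ) (G : EuclideanSpace ℝ (Fin d) → EuclideanSpace ℝ (Fin d))
    (x : EuclideanSpace ℝ (Fin d)) :
    inner ℝ (G x) (projGrad d G x) = (‖projGrad d G x‖ : ℝ)^2 := by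
  rw [← real_inner_self_eq_norm_sq]
  simp only [PiLp.inner_apply, RCLike.inner_apply, conj_trivial]
  refine Finset.sum_congr rfl fun i _ => ?_
  unfold projGrad
  simp only [PiLp.toLp_apply]
  split_ifs with h1 h2
  · rcases le_total (G x i) 0 with h | h
    · simp [max_eq_left h]
    · simp [max_eq_right h]
  · rcases le_total (G x i) 0 with h | h
    · simp [min_eq_left h]; exact Or.inl h
    · simp [min_eq_right h]; exact Or.inr h
  · ring

/-- if the unit-speed projected gradient flow started at `x₀`
stays in `[0,1]^d`, remains in the rectangle `R` up to its exit time `T`,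
exits through the face `E`, and the projected gradient norm stays `> c`
along the way, then `min_{y ∈ E} f(y) ≤ f(x₀) - c · dist(x₀, E)`. -/
theorem stmt2 (d : ℕ) (f : EuclideanSpace ℝ (Fin d) → ℝ)
    (G : EuclideanSpace ℝ (Fin d) → EuclideanSpace ℝ (Fin d))
    (hG : ∀ x, HasGradientAt f (G x) x)
    (hlip : ∀ x y, ‖G x - G y‖ ≤ ‖x - y‖)
    (a b : Fin d → ℝ) (hab : ∀ i, a i ≤ b i)
    (R : Set (EuclideanSpace ℝ (Fin d)))
    (hRdef : R = {y : EuclideanSpace ℝ (Fin d) | ∀ i, y i ∈ Set.Icc (a i) (b i)})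
    (hRcube : R ⊆ {y : EuclideanSpace ℝ (Fin d) | ∀ i, y i ∈ Set.Icc (0:ℝ) 1})
    (x₀ : EuclideanSpace ℝ (Fin d)) (hx₀ : x₀ ∈ R)
    (c : ℝ) (hc : 0 ≤ c)
    (T : ℝ) (hT : 0 ≤ T)
    (γ : ℝ → EuclideanSpace ℝ (Fin d))
    (hγ0 : γ 0 = x₀)
    (hflow : ∀ t ∈ Set.Icc 0 T,
      HasDerivAt γ (-(‖projGrad d G (γ t)‖)⁻¹ • projGrad d G (γ t)) t)
    (hcube : ∀ t ∈ Set.Icc 0 T, ∀ i, γ t i ∈ Set.Icc (0:ℝ) 1)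
    (hinR : ∀ t ∈ Set.Icc 0 T, γ t ∈ R)
    (k : Fin d) (v : ℝ) (hv : v = a k ∨ v = b k)
    (E : Set (EuclideanSpace ℝ (Fin d)))
    (hEdef : E = {y | y ∈ R ∧ y k = v})
    (hexit : γ T ∈ E)
    (hbig : ∀ t ∈ Set.Icc 0 T, c < ‖projGrad d G (γ t)‖) :
    ∃ y ∈ E, f y ≤ f x₀ - c * Metric.infDist x₀ E := by
  refine ⟨γ T, hexit, ?_⟩
  set g : ℝ → EuclideanSpace ℝ (Fin d) := fun t => projGrad d G (γ t) with hg
  have hgpos : ∀ t ∈ Set.Icc 0 T, (0:ℝ) < ‖g t‖ := fun t ht => lt_of_le_of_lt hc (hbig t ht)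
  -- derivative of f ∘ γ
  have hderiv : ∀ t ∈ Set.Icc 0 T, HasDerivAt (fun s => f (γ s)) (-‖g t‖) t := by
    intro t ht
    have h1 := (hG (γ t)).hasFDerivAt.comp_hasDerivAt t (hflow t ht)
    have h2 : (InnerProductSpace.toDual ℝ _ (G (γ t))) (-(‖g t‖)⁻¹ • g t) = -‖g t‖ := by
      rw [InnerProductSpace.toDual_apply_apply, inner_smul_right, key_inner]
      have := (hgpos t ht).ne'
      field_simp
      ring
    rw [h2] at h1
    exact h1
  -- f (γ T) + c*T ≤ f (γ 0)
  have hφ : ∀ t ∈ Set.Icc 0 T, HasDerivAt (fun s => f (γ s) + c * s) (-‖g t‖ + c) t :=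
    fun t ht => (hderiv t ht).add ((hasDerivAt_id t).const_mul c |>.congr_deriv (by ring))
  have hmono : AntitoneOn (fun s => f (γ s) + c * s) (Set.Icc 0 T) := by
    apply antitoneOn_of_deriv_nonpos (convex_Icc 0 T)
    · exact fun t ht => ((hφ t ht).differentiableAt).continuousAt.continuousWithinAt
    · intro t ht
      rw [interior_Icc] at ht
      exact ((hφ t (Set.Ioo_subset_Icc_self ht)).differentiableAt).differentiableWithinAt
    · intro t ht
      rw [interior_Icc] at ht
      have ht' : t ∈ Set.Icc 0 T := Set.Ioo_subset_Icc_self ht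
      rw [(hφ t ht').deriv]
      linarith [hbig t ht']
  have hfT : f (γ T) + c * T ≤ f (γ 0) + c * 0 :=
    hmono (Set.left_mem_Icc.2 hT) (Set.right_mem_Icc.2 hT) hT
  -- ‖γ T - γ 0‖ ≤ T
  have hnorm : ‖γ T - γ 0‖ ≤ 1 * ‖T - 0‖ := by
    apply Convex.norm_image_sub_le_of_norm_hasDerivWithin_le
      (f' := fun t => -(‖g t‖)⁻¹ • g t)
      (fun t ht => (hflow t ht).hasDerivWithinAt) ?_ (convex_Icc 0 T)
      (Set.left_mem_Icc.2 hT) (Set.right_mem_Icc.2 hT)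
    intro t ht
    rw [norm_smul, norm_neg, norm_inv, norm_norm, inv_mul_cancel₀ (hgpos t ht).ne']
  have hdist : Metric.infDist x₀ E ≤ T := by
    refine le_trans (Metric.infDist_le_dist_of_mem hexit) ?_
    rw [dist_eq_norm]
    calc ‖x₀ - γ T‖ = ‖γ T - γ 0‖ := by rw [hγ0, norm_sub_rev]
    _ ≤ 1 * ‖T - 0‖ := hnorm
    _ = T := by rw [one_mul, sub_zero, Real.norm_of_nonneg hT]
  have := mul_le_mul_of_nonneg_left hdist hc
  rw [hγ0] at hfT
  linarith
end

section
/- Let R be an axis-aligned rectangle in ℝ² with aspect ratio at most 3, x ∈ R, E an edge of R with r = dist(x,E) > 0, and for x₀ = x define R_i = R ∩ {y : ‖x_{i−1} − y‖_∞ ≤ r/3} for points x_{i−1} ∈ ∂R_{i−1} (any points with the R_i nonempty rectangles). Then vol(R_i) ≤ (2/3)·vol(R), and R_i has aspect ratio at most 3 (in fact at most 2). -/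
/-- shrinking in the edge fixing step. `R = [a₁,b₁]×[a₂,b₂]`
has aspect ratio at most 3, the edge `E` is parallel to the first axis and
`r = dist(x,E)` so that `b₂ - a₂ ≥ r`; `Rᵢ = R ∩ {y : ‖z - y‖_∞ ≤ r/3}` for a
point `z ∈ R`. Then `vol(Rᵢ) ≤ (2/3)·vol(R)` and the aspect ratio of `Rᵢ`
is at most 2 (in particular at most 3). -/
theorem stmt14 (a₁ b₁ a₂ b₂ r z₁ z₂ : ℝ)
    (hr : 0 < r)
    (hz₁ : z₁ ∈ Set.Icc a₁ b₁) (hz₂ : z₂ ∈ Set.Icc a₂ b₂)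
    (hℓ₂ : r ≤ b₂ - a₂)
    (haspect : max (b₁ - a₁) (b₂ - a₂) / min (b₁ - a₁) (b₂ - a₂) ≤ 3)
    (hpos : 0 < b₁ - a₁) :
    (min b₁ (z₁ + r/3) - max a₁ (z₁ - r/3)) * (min b₂ (z₂ + r/3) - max a₂ (z₂ - r/3))
        ≤ (2/3) * ((b₁ - a₁) * (b₂ - a₂)) ∧
    max (min b₁ (z₁ + r/3) - max a₁ (z₁ - r/3)) (min b₂ (z₂ + r/3) - max a₂ (z₂ - r/3)) /
      min (min b₁ (z₁ + r/3) - max a₁ (z₁ - r/3)) (min b₂ (z₂ + r/3) - max a₂ (z₂ - r/3))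
        ≤ 2 := by
  obtain ⟨hz1a, hz1b⟩ := hz₁
  obtain ⟨hz2a, hz2b⟩ := hz₂
  have hkey : b₂ - a₂ ≤ 3 * (b₁ - a₁) := by
    rcases le_total (b₁ - a₁) (b₂ - a₂) with h | h
    · rw [max_eq_right h, min_eq_left h, div_le_iff₀ hpos] at haspect
      linarith
    · linarith
  have hba1 : r / 3 ≤ b₁ - a₁ := by linarith
  have hl1lo : r / 3 ≤ min b₁ (z₁ + r/3) - max a₁ (z₁ - r/3) := by
    rcases min_cases b₁ (z₁ + r/3) with ⟨h1, _⟩ | ⟨h1, _⟩ <;>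
      rcases max_cases a₁ (z₁ - r/3) with ⟨h2, _⟩ | ⟨h2, _⟩ <;> rw [h1, h2] <;> linarith
  have hl2lo : r / 3 ≤ min b₂ (z₂ + r/3) - max a₂ (z₂ - r/3) := by
    rcases min_cases b₂ (z₂ + r/3) with ⟨h1, _⟩ | ⟨h1, _⟩ <;>
      rcases max_cases a₂ (z₂ - r/3) with ⟨h2, _⟩ | ⟨h2, _⟩ <;> rw [h1, h2] <;> linarith
  have h1u : min b₁ (z₁ + r/3) - max a₁ (z₁ - r/3) ≤ b₁ - a₁ := by
    linarith [min_le_left b₁ (z₁ + r/3), le_max_left a₁ (z₁ - r/3)]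
  have h1u' : min b₁ (z₁ + r/3) - max a₁ (z₁ - r/3) ≤ 2 * r / 3 := by
    linarith [min_le_right b₁ (z₁ + r/3), le_max_right a₁ (z₁ - r/3)]
  have h2u : min b₂ (z₂ + r/3) - max a₂ (z₂ - r/3) ≤ 2 * r / 3 := by
    linarith [min_le_right b₂ (z₂ + r/3), le_max_right a₂ (z₂ - r/3)]
  constructor
  · nlinarith [mul_le_mul h1u h2u (by linarith) (le_of_lt hpos)]
  · rw [div_le_iff₀ (by linarith [le_min hl1lo hl2lo] : (0:ℝ) < min _ _)]
    have := le_min hl1lo hl2lo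
    have := max_le h1u' h2u
    linarith
end

section
/- Let X be a random monotone path of length n on the grid, and suppose that for all i < n and all vertex prefixes, P(X_n = u | X[i] = P[i]) ≤ c/((n−i)·h(n−i)) for every u with ‖u‖₁ = n, where h : ℕ → ℝ is decreasing and positive. Then for every fixed monotone path P, Σ_{i=0}^{n−1} Σ_{Q : Q_n = P_n} P(X = Q | X[i] = P[i]) ≤ c·Σ_{k=1}^{n} 1/(k·h(k)), and consequently Σ_Q w_X(P,Q) ≥ P(X=P)·(n − c·S_h(n)) where S_h(n) = Σ_{k=1}^n 1/(k·h(k)). -/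
open scoped Classical

/-- A monotone path of length `n` on the grid: starts at the origin, moves
up or right for the first `n` steps, and is frozen afterwards. -/
def IsMonoPath (n : ℕ) (p : ℕ → ℤ × ℤ) : Prop :=
  p 0 = (0, 0) ∧
  (∀ i < n, p (i+1) = p i + (0, 1) ∨ p (i+1) = p i + (1, 0)) ∧
  (∀ i, n ≤ i → p (i+1) = p i)

def MonoPath (n : ℕ) := {p : ℕ → ℤ × ℤ // IsMonoPath n p}

/-- `P` and `Q` have the same prefix of the first `i+1` vertices. -/
def agree (n i : ℕ) (P Q : MonoPath n) : Prop := ∀ j ≤ i, P.1 j = Q.1 j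

/-- `ℙ(X[i] = P[i])` for the random path `X` with distribution `p`. -/
noncomputable def prefProb (n : ℕ) (p : MonoPath n → ℝ) (P : MonoPath n)
    (i : ℕ) : ℝ :=
  ∑' Q : MonoPath n, if agree n i P Q then p Q else 0

/-- `ℙ(X = P' ∣ X[i] = P[i])` (with the convention `0/0 = 0`). -/
noncomputable def condProb (n : ℕ) (p : MonoPath n → ℝ) (P' P : MonoPath n)
    (i : ℕ) : ℝ :=
  (if agree n i P P' then p P' else 0) / prefProb n p P i

/-- `ℙ(X_m = u ∣ X[i] = P[i])`. -/
noncomputable def endAtProb (n : ℕ) (p : MonoPath n → ℝ) (P : MonoPath n)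
    (i m : ℕ) (u : ℤ × ℤ) : ℝ :=
  (∑' Q : MonoPath n, if agree n i P Q ∧ Q.1 m = u then p Q else 0) /
    prefProb n p P i

/-- The weight function `w_X(P, P')`. -/
noncomputable def wgt (n : ℕ) (p : MonoPath n → ℝ) (P P' : MonoPath n) : ℝ :=
  if P.1 n = P'.1 n then 0
  else p P * ∑ i ∈ Finset.range n, condProb n p P' P i

/-- `S_h(n) = Σ_{k=1}^n 1/(k·h(k))`. -/
noncomputable def Snh (h : ℕ → ℝ) (n : ℕ) : ℝ :=
  ∑ k ∈ Finset.Icc 1 n, 1 / ((k : ℝ) * h k)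

lemma agree_self (n i : ℕ) (P : MonoPath n) : agree n i P P := fun _ _ => rfl

lemma summable_ind (n i : ℕ) (p : MonoPath n → ℝ) (hsum : Summable p)
    (P : MonoPath n) :
    Summable (fun Q => if agree n i P Q then p Q else 0) := by
  have : (fun Q => if agree n i P Q then p Q else 0)
      = Set.indicator {Q | agree n i P Q} p := by
    funext Q; simp [Set.indicator]
  rw [this]
  exact hsum.indicator _

lemma summable_cond (n i : ℕ) (p : MonoPath n → ℝ) (hsum : Summable p)
    (P : MonoPath n) :
    Summable (fun Q => condProb n p Q P i) :=
  (summable_ind n i p hsum P).div_const _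

lemma prefProb_nonneg (n i : ℕ) (p : MonoPath n → ℝ) (hp : ∀ P, 0 ≤ p P)
    (P : MonoPath n) : 0 ≤ prefProb n p P i := by
  apply tsum_nonneg
  intro Q; split <;> [exact hp Q; exact le_rfl]

lemma prefProb_ge (n i : ℕ) (p : MonoPath n → ℝ) (hp : ∀ P, 0 ≤ p P)
    (hsum : Summable p) (P : MonoPath n) : p P ≤ prefProb n p P i := by
  have h1 : (if agree n i P P then p P else 0) ≤ prefProb n p P i := by
    apply Summable.le_tsum (summable_ind n i p hsum P) P
    intro Q _; split <;> [exact hp Q; exact le_rfl]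
  rwa [if_pos (agree_self n i P)] at h1

lemma endpoint_coords (n : ℕ) (P : MonoPath n) :
    (P.1 n).1.natAbs + (P.1 n).2.natAbs = n := by
  have h0 := P.2.1
  have hstep := P.2.2.1
  set f := P.1 with hfP
  have H : ∀ i, i ≤ n → 0 ≤ (f i).1 ∧ 0 ≤ (f i).2 ∧ (f i).1 + (f i).2 = i := by
    intro i
    induction i with
    | zero => intro _; simp [h0]
    | succ i ih =>
      intro hi
      have hi' : i < n := hi
      obtain ⟨ha, hb, hab⟩ := ih (le_of_lt hi')
      rcases hstep i hi' with h | h <;>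
        simp [h, Prod.ext_iff] <;> push_cast <;> omega
  obtain ⟨ha, hb, hab⟩ := H n le_rfl
  omega

lemma cond_sum_eq_endAt (n i : ℕ) (p : MonoPath n → ℝ) (hsum : Summable p)
    (P : MonoPath n) :
    ∑' Q : {Q : MonoPath n // Q.1 n = P.1 n}, condProb n p Q.1 P i
      = endAtProb n p P i n (P.1 n) := by
  unfold condProb endAtProb
  rw [tsum_div_const]
  congr 1
  refine Eq.trans (tsum_subtype {Q : MonoPath n | Q.1 n = P.1 n}
    (fun Q => if agree n i P Q then p Q else 0)) ?_
  apply tsum_congr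
  intro Q
  by_cases hQ : Q.1 n = P.1 n <;> by_cases hA : agree n i P Q <;>
    simp [Set.indicator, hQ, hA]

/-- under the unpredictability hypothesis
`ℙ(X_n = u ∣ X[i] = P[i]) ≤ c/((n-i)·h(n-i))`, one has
`Σ_{i<n} Σ_{Q : Q_n = P_n} ℙ(X = Q ∣ X[i] = P[i]) ≤ c·S_h(n)` and hence
`Σ_Q w_X(P,Q) ≥ ℙ(X = P)·(n − c·S_h(n))`. -/
theorem stmt18 (n : ℕ) (p : MonoPath n → ℝ)
    (hp : ∀ P, 0 ≤ p P) (hsum : Summable p) (htot : ∑' P, p P = 1)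
    (h : ℕ → ℝ) (hhpos : ∀ k, 0 < h k) (hhdec : Antitone h)
    (c : ℝ) (hc : 0 ≤ c)
    (hunpred : ∀ P : MonoPath n, ∀ i < n, ∀ u : ℤ × ℤ,
      u.1.natAbs + u.2.natAbs = n →
      endAtProb n p P i n u ≤ c / (((n - i : ℕ) : ℝ) * h (n - i)))
    (P : MonoPath n) :
    (∑ i ∈ Finset.range n,
        ∑' Q : {Q : MonoPath n // Q.1 n = P.1 n}, condProb n p Q.1 P i)
      ≤ c * Snh h n ∧
    p P * ((n : ℝ) - c * Snh h n) ≤ ∑' Q : MonoPath n, wgt n p P Q := by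
  -- Part 1
  have part1 : (∑ i ∈ Finset.range n,
      ∑' Q : {Q : MonoPath n // Q.1 n = P.1 n}, condProb n p Q.1 P i)
      ≤ c * Snh h n := by
    have hle : ∀ i ∈ Finset.range n,
        (∑' Q : {Q : MonoPath n // Q.1 n = P.1 n}, condProb n p Q.1 P i)
          ≤ c / (((n - i : ℕ) : ℝ) * h (n - i)) := by
      intro i hi
      rw [Finset.mem_range] at hi
      rw [cond_sum_eq_endAt n i p hsum P]
      exact hunpred P i hi (P.1 n) (endpoint_coords n P)
    calc (∑ i ∈ Finset.range n,
          ∑' Q : {Q : MonoPath n // Q.1 n = P.1 n}, condProb n p Q.1 P i)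
        ≤ ∑ i ∈ Finset.range n, c / (((n - i : ℕ) : ℝ) * h (n - i)) :=
          Finset.sum_le_sum hle
      _ = c * Snh h n := by
          rw [Snh, Finset.mul_sum]
          apply Finset.sum_nbij' (fun i => n - i) (fun k => n - k)
          · intro i hi; rw [Finset.mem_range] at hi
            rw [Finset.mem_Icc]; omega
          · intro k hk; rw [Finset.mem_Icc] at hk
            rw [Finset.mem_range]; omega
          · intro i hi; rw [Finset.mem_range] at hi; omega
          · intro k hk; rw [Finset.mem_Icc] at hk; omega
          · intro i _
            rw [div_eq_mul_one_div]
  refine ⟨part1, ?_⟩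
  -- Part 2
  by_cases hpP : p P = 0
  · rw [hpP, zero_mul]
    apply tsum_nonneg
    intro Q
    unfold wgt
    split
    · exact le_rfl
    · apply mul_nonneg (hp P)
      apply Finset.sum_nonneg
      intro i _
      unfold condProb
      apply div_nonneg _ (prefProb_nonneg n i p hp P)
      split <;> [exact hp _; exact le_rfl]
  · have hpPpos : 0 < p P := lt_of_le_of_ne (hp P) (Ne.symm hpP)
    have hpref : ∀ i, 0 < prefProb n p P i :=
      fun i => lt_of_lt_of_le hpPpos (prefProb_ge n i p hp hsum P)
    -- total conditional sum equals 1
    have hT : ∀ i, (∑' Q : MonoPath n, condProb n p Q P i) = 1 := by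
      intro i
      unfold condProb
      rw [tsum_div_const]
      exact div_self (ne_of_gt (hpref i))
    set f : MonoPath n → ℝ := fun Q => ∑ i ∈ Finset.range n, condProb n p Q P i
      with hf
    have hfsum : Summable f :=
      summable_sum (fun i _ => summable_cond n i p hsum P)
    have hfnonneg : ∀ Q, 0 ≤ f Q := by
      intro Q
      apply Finset.sum_nonneg
      intro i _
      unfold condProb
      apply div_nonneg _ (prefProb_nonneg n i p hp P)
      split <;> [exact hp _; exact le_rfl]
    have hA : ∑' Q, f Q = n := by
      rw [hf, Summable.tsum_finsetSum (fun i _ => summable_cond n i p hsum P)]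
      simp [hT]
    -- indicator decomposition
    set s : Set (MonoPath n) := {Q | Q.1 n = P.1 n} with hs
    have hwgt : ∀ Q, wgt n p P Q = p P * f Q - s.indicator (fun Q => p P * f Q) Q := by
      intro Q
      unfold wgt
      by_cases hQ : P.1 n = Q.1 n
      · have : Q ∈ s := by simp [hs, hQ.symm]
        simp [hQ, Set.indicator_of_mem this]
      · have : Q ∉ s := by simp [hs]; exact fun h' => hQ h'.symm
        simp [hQ, Set.indicator_of_notMem this, hf]
    have hBsum : Summable (s.indicator (fun Q => p P * f Q)) :=
      ((hfsum.mul_left (p P)).indicator s)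
    have hB : ∑' Q, s.indicator (fun Q => p P * f Q) Q
        = p P * ∑ i ∈ Finset.range n,
            ∑' Q : {Q : MonoPath n // Q.1 n = P.1 n}, condProb n p Q.1 P i := by
      rw [← tsum_subtype s (fun Q => p P * f Q)]
      have : ∀ Q : s, p P * f Q.1 = p P * ∑ i ∈ Finset.range n, condProb n p Q.1 P i := by
        intro Q; rfl
      rw [tsum_congr this, tsum_mul_left]
      congr 1
      exact Summable.tsum_finsetSum (fun i _ => Summable.subtype (summable_cond n i p hsum P) s)
    calc p P * ((n : ℝ) - c * Snh h n)
        ≤ p P * ((n : ℝ) - ∑ i ∈ Finset.range n,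
            ∑' Q : {Q : MonoPath n // Q.1 n = P.1 n}, condProb n p Q.1 P i) := by
          apply mul_le_mul_of_nonneg_left _ (hp P)
          exact sub_le_sub_left part1 _
      _ = ∑' Q : MonoPath n, wgt n p P Q := by
          rw [show (fun Q => wgt n p P Q)
              = fun Q => p P * f Q - s.indicator (fun Q => p P * f Q) Q
            from funext hwgt]
          rw [Summable.tsum_sub (hfsum.mul_left (p P)) hBsum, tsum_mul_left, hA, hB]
          ring
end

section
/- Under the same unpredictability hypothesis on the random monotone path X (P(X_m = u | X[i] fixed) ≤ c/((m−i)·h(m−i)) for i < m), for any fixed monotone path P and any vertex v with ‖v‖₁ = ℓ and P_ℓ ≠ v: Σ_{Q : Q_ℓ = v} w_X(P,Q) ≤ 2·c·P(X=P)·S_h(n). -/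
open scoped Classical

/-- under the unpredictability hypothesis
`ℙ(X_m = u ∣ X[i] = P[i]) ≤ c/((m-i)·h(m-i))` for `i < m ≤ n`, for any fixed
monotone path `P` and grid vertex `v` with `‖v‖₁ = ℓ` and `P_ℓ ≠ v`,
`Σ_{Q : Q_ℓ = v} w_X(P,Q) ≤ 2·c·ℙ(X = P)·S_h(n)`. -/
theorem stmt19 (n : ℕ) (p : MonoPath n → ℝ)
    (hp : ∀ P, 0 ≤ p P) (hsum : Summable p) (htot : ∑' P, p P = 1)
    (h : ℕ → ℝ) (hhpos : ∀ k, 0 < h k) (hhdec : Antitone h)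
    (c : ℝ) (hc : 0 ≤ c)
    (hunpred : ∀ P : MonoPath n, ∀ i m : ℕ, i < m → m ≤ n →
      ∀ u : ℤ × ℤ, u.1.natAbs + u.2.natAbs = m →
      endAtProb n p P i m u ≤ c / (((m - i : ℕ) : ℝ) * h (m - i)))
    (P : MonoPath n) (ℓ : ℕ) (hℓ : ℓ < n) (v : ℤ × ℤ)
    (hv0 : 0 ≤ v.1 ∧ 0 ≤ v.2) (hv : v.1.natAbs + v.2.natAbs = ℓ)
    (hPv : P.1 ℓ ≠ v) :
    ∑' Q : {Q : MonoPath n // Q.1 ℓ = v}, wgt n p P Q.1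
      ≤ 2 * c * p P * Snh h n := by
  classical
  set S : Set (MonoPath n) := {Q | Q.1 ℓ = v} with hS
  have hpref : ∀ i, 0 ≤ prefProb n p P i := fun i =>
    tsum_nonneg fun Q => by split <;> simp [hp]
  set f : ℕ → MonoPath n → ℝ :=
    fun i Q => if agree n i P Q ∧ Q.1 ℓ = v then p Q else 0 with hfdef
  have hf_nonneg : ∀ i Q, 0 ≤ f i Q := fun i Q => by
    simp only [hfdef]; split <;> simp [hp]
  have hf_summable : ∀ i, Summable (f i) := fun i =>
    Summable.of_nonneg_of_le (hf_nonneg i)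
      (fun Q => by simp only [hfdef]; split <;> simp [hp]) hsum
  set g : MonoPath n → ℝ :=
    fun Q => p P * ∑ i ∈ Finset.range ℓ, f i Q / prefProb n p P i with hgdef
  have hg_nonneg : ∀ Q, 0 ≤ g Q := fun Q =>
    mul_nonneg (hp P) (Finset.sum_nonneg fun i _ =>
      div_nonneg (hf_nonneg i Q) (hpref i))
  have hg_summable : Summable g :=
    (Summable.mul_left (p P)
      (summable_sum fun i _ => (hf_summable i).div_const _))
  have hcond_nonneg : ∀ Q i, 0 ≤ condProb n p Q P i := fun Q i => by
    unfold condProb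
    refine div_nonneg ?_ (hpref i)
    split <;> simp [hp]
  have hwgt_nonneg : ∀ Q, 0 ≤ wgt n p P Q := fun Q => by
    unfold wgt; split
    · exact le_rfl
    · exact mul_nonneg (hp P) (Finset.sum_nonneg fun i _ => hcond_nonneg Q i)
  -- pointwise bound
  have hpt : ∀ Q, S.indicator (wgt n p P) Q ≤ g Q := by
    intro Q
    by_cases hQ : Q ∈ S
    · rw [Set.indicator_of_mem hQ]
      have hQv : Q.1 ℓ = v := hQ
      have hb : wgt n p P Q ≤ p P * ∑ i ∈ Finset.range n, condProb n p Q P i := by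
        unfold wgt; split
        · exact mul_nonneg (hp P) (Finset.sum_nonneg fun i _ => hcond_nonneg Q i)
        · exact le_rfl
      refine hb.trans ?_
      have hzero : ∀ i ∈ Finset.range n, i ∉ Finset.range ℓ →
          condProb n p Q P i = 0 := by
        intro i _ hi
        simp only [Finset.mem_range, not_lt] at hi
        unfold condProb
        rw [if_neg, zero_div]
        intro hag
        exact hPv ((hag ℓ hi).trans hQv)
      have hsum_eq : ∑ i ∈ Finset.range n, condProb n p Q P i
          = ∑ i ∈ Finset.range ℓ, condProb n p Q P i :=
        (Finset.sum_subset (Finset.range_subset_range.mpr hℓ.le) hzero).symm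
      rw [hsum_eq]
      have hgQ : g Q = p P * ∑ i ∈ Finset.range ℓ, f i Q / prefProb n p P i := rfl
      rw [hgQ]
      refine mul_le_mul_of_nonneg_left (Finset.sum_le_sum fun i _ => ?_) (hp P)
      exact le_of_eq (by unfold condProb; simp [hfdef, hQv])
    · rw [Set.indicator_of_notMem hQ]
      exact hg_nonneg Q
  have hind_summable : Summable (S.indicator (wgt n p P)) :=
    Summable.of_nonneg_of_le
      (fun Q => Set.indicator_nonneg (fun Q _ => hwgt_nonneg Q) Q) hpt hg_summable
  have h1 : ∑' Q : {Q : MonoPath n // Q.1 ℓ = v}, wgt n p P Q.1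
      = ∑' Q : MonoPath n, S.indicator (wgt n p P) Q := tsum_subtype S (wgt n p P)
  have h2 : ∑' Q : MonoPath n, S.indicator (wgt n p P) Q ≤ ∑' Q, g Q :=
    Summable.tsum_le_tsum hpt hind_summable hg_summable
  have h3 : ∑' Q, g Q = p P * ∑ i ∈ Finset.range ℓ, endAtProb n p P i ℓ v := by
    rw [hgdef, tsum_mul_left]
    congr 1
    rw [Summable.tsum_finsetSum (fun i _ => (hf_summable i).div_const _)]
    refine Finset.sum_congr rfl fun i _ => ?_
    rw [tsum_div_const]
    rfl
  have h4 : ∑ i ∈ Finset.range ℓ, endAtProb n p P i ℓ v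
      ≤ ∑ i ∈ Finset.range ℓ, c / (((ℓ - i : ℕ) : ℝ) * h (ℓ - i)) := by
    refine Finset.sum_le_sum fun i hi => ?_
    exact hunpred P i ℓ (Finset.mem_range.mp hi) hℓ.le v hv
  have h5 : ∑ i ∈ Finset.range ℓ, c / (((ℓ - i : ℕ) : ℝ) * h (ℓ - i))
      ≤ c * Snh h n := by
    have himg : ∑ i ∈ Finset.range ℓ, c / (((ℓ - i : ℕ) : ℝ) * h (ℓ - i))
        = ∑ k ∈ (Finset.range ℓ).image (fun i => ℓ - i),
            c / ((k : ℝ) * h k) := by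
      rw [Finset.sum_image]
      intro x hx y hy hxy
      simp only [Finset.coe_range, Set.mem_Iio, Finset.mem_coe, Finset.mem_range] at hx hy hxy
      omega
    rw [himg]
    have hmono : ∑ k ∈ (Finset.range ℓ).image (fun i => ℓ - i),
        c / ((k : ℝ) * h k) ≤ ∑ k ∈ Finset.Icc 1 n, c / ((k : ℝ) * h k) := by
      refine Finset.sum_le_sum_of_subset_of_nonneg ?_ ?_
      · intro k hk
        simp only [Finset.mem_image, Finset.mem_range] at hk
        obtain ⟨i, hi, rfl⟩ := hk
        simp only [Finset.mem_Icc]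
        omega
      · intro k _ _
        exact div_nonneg hc (mul_nonneg (Nat.cast_nonneg k) (hhpos k).le)
    refine hmono.trans_eq ?_
    rw [Snh, Finset.mul_sum]
    exact Finset.sum_congr rfl fun k _ => by rw [mul_one_div]
  have hSnonneg : 0 ≤ Snh h n :=
    Finset.sum_nonneg fun k _ =>
      div_nonneg one_pos.le (mul_nonneg (Nat.cast_nonneg k) (hhpos k).le)
  calc ∑' Q : {Q : MonoPath n // Q.1 ℓ = v}, wgt n p P Q.1
      = ∑' Q : MonoPath n, S.indicator (wgt n p P) Q := h1
    _ ≤ ∑' Q, g Q := h2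
    _ = p P * ∑ i ∈ Finset.range ℓ, endAtProb n p P i ℓ v := h3
    _ ≤ p P * (c * Snh h n) := by
        refine mul_le_mul_of_nonneg_left (h4.trans h5) (hp P)
    _ ≤ 2 * c * p P * Snh h n := by nlinarith [mul_nonneg (mul_nonneg hc hSnonneg) (hp P)]
end
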